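/- (Pair of frequencies, degree 1 case) Let p ≠ q be primes, let α_1, α_2 ∈ ℝ, and let ε, ε' > 0 with ε + ε' ≤ 1. Suppose ‖p α_1 − q α_2‖ ≤ ε + ε', where ‖x‖ denotes the distance from x to the nearest integer. Then there exists α ∈ ℝ such that ‖p α − α_2‖ ≤ 2 ε'/q and ‖q α − α_1‖ ≤ 2 ε/p. -/
import Mathlib


/-- `nint x` is the distance from `x` to the nearest integer. -/
noncomputable def nint (x : ℝ) : ℝ := |x - round x|

lemma nint_le_abs_sub_int (x : ℝ) (z : ℤ) : nint x ≤ |x - z| := round_le x z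

theorem pair_of_frequencies (p q : ℕ) (hp : p.Prime) (hq : q.Prime) (hpq : p ≠ q)
    (α₁ α₂ : ℝ) (ε ε' : ℝ) (hε : 0 < ε) (hε' : 0 < ε') (hsum : ε + ε' ≤ 1)
    (h : nint ((p : ℝ) * α₁ - (q : ℝ) * α₂) ≤ ε + ε') :
    ∃ α : ℝ, nint ((p : ℝ) * α - α₂) ≤ 2 * ε' / q ∧ nint ((q : ℝ) * α - α₁) ≤ 2 * ε / p := by
  have hp0 : (0:ℝ) < p := by exact_mod_cast hp.pos
  have hq0 : (0:ℝ) < q := by exact_mod_cast hq.pos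
  have hse : (0:ℝ) < ε + ε' := by linarith
  obtain ⟨a, b, hab⟩ : ∃ a b : ℤ, a * q + b * p = 1 := by
    have hcop : IsCoprime (p:ℤ) (q:ℤ) := by
      rw [Int.isCoprime_iff_gcd_eq_one]
      exact_mod_cast (Nat.coprime_primes hp hq).mpr hpq
    obtain ⟨u, v, huv⟩ := hcop
    exact ⟨v, u, by linarith⟩
  set n : ℤ := round ((p:ℝ) * α₁ - (q:ℝ) * α₂) with hn
  set δ : ℝ := (p:ℝ) * α₁ - (q:ℝ) * α₂ - n with hδdef
  have hδ : |δ| ≤ ε + ε' := h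
  set k : ℤ := a * n with hk
  set l : ℤ := -(b * n) with hl
  have hkl : (q:ℝ) * k - (p:ℝ) * l = n := by
    have : (q:ℤ) * k - (p:ℤ) * l = n := by
      rw [hk, hl]; linear_combination (n:ℤ) * hab
    exact_mod_cast this
  set β₁ : ℝ := (α₂ + k) / p with hβ₁
  set β₂ : ℝ := (α₁ + l) / q with hβ₂
  set α : ℝ := (ε * β₁ + ε' * β₂) / (ε + ε') with hα
  have hδ' : δ = (p:ℝ) * α₁ - (q:ℝ) * α₂ - ((q:ℝ) * k - (p:ℝ) * l) := by
    rw [hδdef, hkl]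
  refine ⟨α, ?_, ?_⟩
  · have h1 : (p:ℝ) * α - α₂ - k = ε' * δ / (q * (ε + ε')) := by
      rw [hα, hβ₁, hβ₂, hδ']
      field_simp
      ring
    calc nint ((p:ℝ) * α - α₂) ≤ |(p:ℝ) * α - α₂ - k| := nint_le_abs_sub_int _ k
      _ = ε' * |δ| / (q * (ε + ε')) := by
          rw [h1, abs_div, abs_mul, abs_of_pos hε',
            abs_of_pos (by positivity : (0:ℝ) < q * (ε + ε'))]
      _ ≤ 2 * ε' / q := by
          rw [div_le_div_iff₀ (by positivity) hq0]
          nlinarith [mul_le_mul_of_nonneg_left hδ (mul_pos hε' hq0).le,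
            mul_pos (mul_pos hε' hq0) hse]
  · have h2 : (q:ℝ) * α - α₁ - l = -(ε * δ) / (p * (ε + ε')) := by
      rw [hα, hβ₁, hβ₂, hδ']
      field_simp
      ring
    calc nint ((q:ℝ) * α - α₁) ≤ |(q:ℝ) * α - α₁ - l| := nint_le_abs_sub_int _ l
      _ = ε * |δ| / (p * (ε + ε')) := by
          rw [h2, abs_div, abs_neg, abs_mul, abs_of_pos hε,
            abs_of_pos (by positivity : (0:ℝ) < p * (ε + ε'))]
      _ ≤ 2 * ε / p := by
          rw [div_le_div_iff₀ (by positivity) hp0]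
          nlinarith [mul_le_mul_of_nonneg_left hδ (mul_pos hε hp0).le,
            mul_pos (mul_pos hε hp0) hse]
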